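/- Let a be a d-dimensional vector with i.i.d. N(0,1) entries, q a query point, p a point with ‖p−q‖₂ = r, and p' a point with ‖p'−q‖₂ < r/c for some c > 1. Set Δ = rt/c where t > 0 solves e^{t²/2} t^{c²} = n/(2π)^{c²/2}. Then P[a·(p'−q) ≥ Δ] ≤ P[a·(p−q) ≥ Δ · (‖p'−q‖₂ c / r)] and in particular P[a·(p'−q) ≥ Δ] ≤ P[X ≥ t] for X ~ N(0,1). -/

import Mathlib

open MeasureTheory ProbabilityTheory Real RealInnerProductSpace

/-- With `Δ = rt/c`, for a random Gaussian vector `a`, a furthest neighbor `p` at distance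
`r` and a near point `p'` with `‖p'−q‖ < r/c`:
`P[a·(p'−q) ≥ Δ] ≤ P[a·(p−q) ≥ Δ·(‖p'−q‖c/r)]` and `P[a·(p'−q) ≥ Δ] ≤ P[X ≥ t]`
for a standard normal `X`. -/
theorem stmt_4 {Ω : Type*} [MeasurableSpace Ω] (P : Measure Ω) [IsProbabilityMeasure P]
    (d : ℕ) (a : Ω → EuclideanSpace ℝ (Fin d)) (q p p' : EuclideanSpace ℝ (Fin d))
    (c r t n : ℝ) (hc : 1 < c) (hr : 0 < r) (ht : 0 < t)
    (heq : Real.exp (t ^ 2 / 2) * t ^ (c ^ 2 : ℝ) = n / (2 * π) ^ ((c ^ 2 : ℝ) / 2))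
    (hp : ‖p - q‖ = r) (hp' : ‖p' - q‖ < r / c) (hp'q : p' ≠ q)
    (hgauss_p : Measure.map (fun ω => ⟪a ω, p - q⟫ / ‖p - q‖) P = gaussianReal 0 1)
    (hgauss_p' : Measure.map (fun ω => ⟪a ω, p' - q⟫ / ‖p' - q‖) P = gaussianReal 0 1) :
    P {ω | r * t / c ≤ ⟪a ω, p' - q⟫}
        ≤ P {ω | (r * t / c) * (‖p' - q‖ * c / r) ≤ ⟪a ω, p - q⟫} ∧
      P {ω | r * t / c ≤ ⟪a ω, p' - q⟫} ≤ gaussianReal 0 1 {x | t ≤ x} := by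
  have hc0 : 0 < c := lt_trans one_pos hc
  have hu : 0 < ‖p' - q‖ := norm_pos_iff.mpr (sub_ne_zero.mpr hp'q)
  set u := ‖p' - q‖ with hudef
  have hur : c * u < r := by
    have := (lt_div_iff₀' hc0).mp hp'
    linarith
  have hne : (gaussianReal 0 1 : Measure ℝ) ≠ 0 := IsProbabilityMeasure.ne_zero _
  have ham' : AEMeasurable (fun ω => ⟪a ω, p' - q⟫ / u) P := by
    by_contra h
    rw [Measure.map_of_not_aemeasurable h] at hgauss_p'
    exact hne hgauss_p'.symm
  have ham : AEMeasurable (fun ω => ⟪a ω, p - q⟫ / ‖p - q‖) P := by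
    by_contra h
    rw [Measure.map_of_not_aemeasurable h] at hgauss_p
    exact hne hgauss_p.symm
  have key' : ∀ b : ℝ, P {ω | b ≤ ⟪a ω, p' - q⟫} = gaussianReal 0 1 {x | b / u ≤ x} := by
    intro b
    rw [show {x : ℝ | b / u ≤ x} = Set.Ici (b / u) from rfl,
      ← hgauss_p', Measure.map_apply_of_aemeasurable ham' measurableSet_Ici]
    congr 1
    ext ω
    simp only [Set.mem_setOf_eq, Set.mem_preimage, Set.mem_Ici]
    exact (div_le_div_iff_of_pos_right hu).symm
  have key : ∀ b : ℝ, P {ω | b ≤ ⟪a ω, p - q⟫} = gaussianReal 0 1 {x | b / r ≤ x} := by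
    intro b
    rw [show {x : ℝ | b / r ≤ x} = Set.Ici (b / r) from rfl,
      ← hgauss_p, Measure.map_apply_of_aemeasurable ham measurableSet_Ici]
    congr 1
    ext ω
    simp only [Set.mem_setOf_eq, Set.mem_preimage, Set.mem_Ici, hp]
    exact (div_le_div_iff_of_pos_right hr).symm
  constructor
  · rw [key', key]
    refine measure_mono fun x hx => ?_
    simp only [Set.mem_setOf_eq] at hx ⊢
    refine le_trans ?_ hx
    rw [div_le_div_iff₀ hr hu,
      show r * t / c * (u * c / r) = t * u by field_simp,
      div_mul_eq_mul_div, le_div_iff₀ hc0]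
    have h2 : (c * u) * (c * u) < r * r := by nlinarith [mul_pos hc0 hu]
    nlinarith [mul_lt_mul_of_pos_left h2 ht,
      mul_nonneg (mul_nonneg (mul_nonneg ht.le hu.le) hu.le)
        (mul_nonneg hc0.le (sub_nonneg.mpr hc.le))]
  · rw [key']
    refine measure_mono fun x hx => ?_
    simp only [Set.mem_setOf_eq] at hx ⊢
    refine le_trans ?_ hx
    rw [div_div, le_div_iff₀ (mul_pos hc0 hu)]
    nlinarith [mul_lt_mul_of_pos_left hur ht]
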